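/- Let W be C² and uniformly convex with constant C_W > 0, let μ_t be the empirical occupation measure of a process X, and on [T_n, T_{n+1}] let X and Y solve dX_t = √2 dB_t − ∇(W*μ_t)(X_t) dt and dY_t = √2 dB_t − ∇(W*μ_{T_n})(Y_t) dt driven by the same Brownian motion. Assume that the 'measure-drift difference' D_t = −∇(W*(μ_t − μ_{T_n}))(X_t) satisfies |D_t| ≤ P(2L_n)·ΔT_n/T_n for all t in the interval. Then for all t ∈ [T_n, T_{n+1}]: |X_t − Y_t| ≤ e^{−C_W(t−T_n)} |X_{T_n} − Y_{T_n}| + (ΔT_n/(T_n C_W)) P(2L_n). -/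

import Mathlib

open MeasureTheory Real Set

lemma grad_mono {E : Type*} [NormedAddCommGroup E] [InnerProductSpace ℝ E]
    [CompleteSpace E] {CW : ℝ} (hCW : 0 < CW) (g : E → ℝ)
    (hconv : ∀ x v : E, CW * ‖v‖ ^ 2 ≤ fderiv ℝ (fun z => fderiv ℝ g z v) x v)
    (a b : E) :
    CW * ‖b - a‖ ^ 2 ≤ (inner ℝ (gradient g b - gradient g a) (b - a) : ℝ) := by
  rcases eq_or_ne b a with rfl | hne
  · simp
  set v : E := b - a with hv
  have hvne : v ≠ 0 := sub_ne_zero.2 hne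
  have hvpos : 0 < CW * ‖v‖ ^ 2 := by
    have : 0 < ‖v‖ := norm_pos_iff.2 hvne
    positivity
  set F : E → ℝ := fun z => fderiv ℝ g z v with hF
  have hdF : ∀ x, DifferentiableAt ℝ F x := by
    intro x
    by_contra h
    have h2 := hconv x v
    rw [show (fun z => fderiv ℝ g z v) = F from rfl,
      fderiv_zero_of_not_differentiableAt h] at h2
    simp at h2
    linarith
  have hφ : ∀ s : ℝ, HasDerivAt (fun s : ℝ => F (a + s • v)) (fderiv ℝ F (a + s • v) v) s := by
    intro s
    have h1 : HasDerivAt (fun s : ℝ => a + s • v) v s := by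
      simpa using ((hasDerivAt_id s).smul_const v).const_add a
    exact (hdF (a + s • v)).hasFDerivAt.comp_hasDerivAt s h1
  have key : CW * ‖v‖ ^ 2 ≤ F b - F a := by
    have hψ : ∀ s : ℝ, HasDerivAt (fun s : ℝ => F (a + s • v) - CW * ‖v‖ ^ 2 * s)
        (fderiv ℝ F (a + s • v) v - CW * ‖v‖ ^ 2) s := by
      intro s
      have h := (hφ s).sub ((hasDerivAt_id s).const_mul (CW * ‖v‖ ^ 2))
      simp only [mul_one] at h
      exact h
    have hmono : Monotone (fun s : ℝ => F (a + s • v) - CW * ‖v‖ ^ 2 * s) := by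
      apply monotone_of_deriv_nonneg
      · exact fun s => (hψ s).differentiableAt
      · intro s
        rw [(hψ s).deriv]
        have := hconv (a + s • v) v
        linarith
    have h01 := hmono (by norm_num : (0:ℝ) ≤ 1)
    simp only [zero_smul, add_zero, one_smul, mul_zero, mul_one, sub_zero] at h01
    have hab : a + v = b := by rw [hv]; abel
    rw [hab] at h01
    linarith
  have hinner : ∀ x : E, (inner ℝ (gradient g x) v : ℝ) = F x := by
    intro x
    simp only [hF, gradient]
    exact InnerProductSpace.toDual_symm_apply
  calc CW * ‖v‖ ^ 2 ≤ F b - F a := key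
    _ = (inner ℝ (gradient g b - gradient g a) v : ℝ) := by
        rw [inner_sub_left, hinner, hinner]


/-- Frozen-measure comparison: if `X` and `Y` are driven by the same Brownian
motion, with drifts `−∇(W*μ_t)` and `−∇(W*μ_{T_n})` respectively (so that the
difference `X − Y` is `C¹` with derivative `−(∇(W*μ_t)(X_t) − ∇(W*μ_{T_n})(Y_t))`),
`W` is uniformly convex with constant `C_W`, and the measure-drift difference
satisfies `|∇(W*μ_t)(X_t) − ∇(W*μ_{T_n})(X_t)| ≤ P(2L_n)·ΔT_n/T_n`, then
`|X_t − Y_t| ≤ e^{−C_W(t−T_n)}|X_{T_n} − Y_{T_n}| + (ΔT_n/(T_n C_W)) P(2L_n)`. -/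
theorem stmt7 (d : ℕ) (CW : ℝ) (hCW : 0 < CW)
    (W : EuclideanSpace ℝ (Fin d) → ℝ) (hW : ContDiff ℝ 2 W)
    (hWconv : ∀ x v : EuclideanSpace ℝ (Fin d),
      CW * ‖v‖ ^ 2 ≤ fderiv ℝ (fun z => fderiv ℝ W z v) x v)
    (Tn Tn1 : ℝ) (hTn : 0 < Tn) (hTn1 : Tn < Tn1)
    (μ : ℝ → Measure (EuclideanSpace ℝ (Fin d)))
    (hμ : ∀ t, IsProbabilityMeasure (μ t))
    (g : ℝ → EuclideanSpace ℝ (Fin d) → ℝ)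
    (hg : ∀ t x, g t x = ∫ y, W (x - y) ∂(μ t))
    (hgconv : ∀ t, ∀ x v : EuclideanSpace ℝ (Fin d),
      CW * ‖v‖ ^ 2 ≤ fderiv ℝ (fun z => fderiv ℝ (g t) z v) x v)
    (X Y : ℝ → EuclideanSpace ℝ (Fin d))
    (hXY : ∀ t ∈ Set.Icc Tn Tn1,
      HasDerivAt (fun s => X s - Y s)
        (-(gradient (g t) (X t) - gradient (g Tn) (Y t))) t)
    (P2Ln : ℝ) (hP2Ln : 0 ≤ P2Ln)
    (hD : ∀ t ∈ Set.Icc Tn Tn1,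
      ‖gradient (g t) (X t) - gradient (g Tn) (X t)‖ ≤ P2Ln * (Tn1 - Tn) / Tn) :
    ∀ t ∈ Set.Icc Tn Tn1,
      ‖X t - Y t‖ ≤ Real.exp (-CW * (t - Tn)) * ‖X Tn - Y Tn‖ +
        (Tn1 - Tn) / (Tn * CW) * P2Ln := by
  set f : ℝ → EuclideanSpace ℝ (Fin d) := fun s => X s - Y s with hf
  set f' : ℝ → EuclideanSpace ℝ (Fin d) :=
    fun s => -(gradient (g s) (X s) - gradient (g Tn) (Y s)) with hf'
  set ε : ℝ := P2Ln * (Tn1 - Tn) / Tn with hε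
  have hε0 : 0 ≤ ε := by
    apply div_nonneg _ hTn.le
    exact mul_nonneg hP2Ln (by linarith)
  set K : ℝ := ε / CW with hK
  have hK0 : 0 ≤ K := div_nonneg hε0 hCW.le
  have hCWK : CW * K = ε := by
    rw [hK]
    field_simp
  set r0 : ℝ := ‖f Tn‖ with hr0
  -- inner product estimate
  have hkey : ∀ t ∈ Set.Icc Tn Tn1,
      (inner ℝ (f' t) (f t) : ℝ) ≤ ε * ‖f t‖ - CW * ‖f t‖ ^ 2 := by
    intro t ht
    have h1 := grad_mono hCW (g Tn) (hgconv Tn) (Y t) (X t)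
    set D : EuclideanSpace ℝ (Fin d) := gradient (g t) (X t) - gradient (g Tn) (X t) with hDdef
    have hsplit : gradient (g t) (X t) - gradient (g Tn) (Y t)
        = D + (gradient (g Tn) (X t) - gradient (g Tn) (Y t)) := by
      rw [hDdef]; abel
    have hDb : ‖D‖ ≤ ε := hD t ht
    have hcs : |(inner ℝ D (f t) : ℝ)| ≤ ε * ‖f t‖ := by
      calc |(inner ℝ D (f t) : ℝ)| ≤ ‖D‖ * ‖f t‖ := abs_real_inner_le_norm D (f t)
        _ ≤ ε * ‖f t‖ := by
            exact mul_le_mul_of_nonneg_right hDb (norm_nonneg _)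
    have hDl : -(ε * ‖f t‖) ≤ (inner ℝ D (f t) : ℝ) := neg_le_of_abs_le hcs
    have e1 : f' t = -(D + (gradient (g Tn) (X t) - gradient (g Tn) (Y t))) := by
      simp only [hf']
      rw [← hsplit]
    have : (inner ℝ (f' t) (f t) : ℝ)
        = -(inner ℝ D (f t) : ℝ)
          - (inner ℝ (gradient (g Tn) (X t) - gradient (g Tn) (Y t)) (f t) : ℝ) := by
      rw [e1, inner_neg_left, inner_add_left]
      ring
    rw [this]
    have hfeq : X t - Y t = f t := rfl
    rw [hfeq] at h1
    linarith
  -- continuity of phi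
  have hφcont : ContinuousOn (fun t => ‖f t‖ ^ 2) (Icc Tn Tn1) := by
    intro t ht
    exact (((hXY t ht).continuousAt.continuousWithinAt).norm.pow 2)
  have hφderiv : ∀ t ∈ Set.Icc Tn Tn1,
      HasDerivAt (fun t => ‖f t‖ ^ 2) (2 * (inner ℝ (f' t) (f t) : ℝ)) t := by
    intro t ht
    have h := HasDerivAt.inner ℝ (hXY t ht) (hXY t ht)
    have heq : (fun s => (inner ℝ (f s) (f s) : ℝ)) = fun s => ‖f s‖ ^ 2 := by
      funext s; exact real_inner_self_eq_norm_sq (f s)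
    rw [heq] at h
    refine h.congr_deriv ?_
    rw [real_inner_comm (f t) (f' t)]
    ring
  -- main delta-step
  have hmain : ∀ δ > (0:ℝ), ∀ t ∈ Set.Icc Tn Tn1,
      ‖f t‖ ≤ Real.exp (-CW * (t - Tn)) * r0 + (K + δ) := by
    intro δ hδ
    set B : ℝ → ℝ := fun t => Real.exp (-CW * (t - Tn)) * r0 + (K + δ) with hB
    have hr00 : 0 ≤ r0 := norm_nonneg _
    have hBpos : ∀ t, 0 < B t := by
      intro t
      have h1 : 0 ≤ Real.exp (-CW * (t - Tn)) * r0 := mul_nonneg (Real.exp_pos _).le hr00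
      simp only [hB]; linarith
    have hBd : ∀ t, HasDerivAt B (-CW * (Real.exp (-CW * (t - Tn)) * r0)) t := by
      intro t
      have h1 : HasDerivAt (fun t : ℝ => -CW * (t - Tn)) (-CW) t := by
        simpa using ((hasDerivAt_id t).sub_const Tn).const_mul (-CW)
      have h2 := (h1.exp.mul_const r0).add_const (K + δ)
      refine h2.congr_deriv ?_
      ring
    have hB2d : ∀ t, HasDerivAt (fun t => B t ^ 2)
        (2 * B t * (-CW * (Real.exp (-CW * (t - Tn)) * r0))) t := by
      intro t
      have := (hBd t).pow 2
      refine this.congr_deriv ?_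
      push_cast
      ring
    have hsq : ∀ ⦃x⦄, x ∈ Icc Tn Tn1 → ‖f x‖ ^ 2 ≤ B x ^ 2 := by
      apply image_le_of_deriv_right_lt_deriv_boundary hφcont
        (fun x hx => (hφderiv x (Ico_subset_Icc_self hx)).hasDerivWithinAt) _ hB2d
      · -- bound at touching points
        intro x hx heq
        have hx' : x ∈ Icc Tn Tn1 := Ico_subset_Icc_self hx
        have hBx := hBpos x
        have hfx : ‖f x‖ = B x := by
          have h1 : ‖f x‖ = Real.sqrt (B x ^ 2) := by
            rw [← heq, Real.sqrt_sq (norm_nonneg _)]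
          rw [h1, Real.sqrt_sq hBx.le]
        have h1 := hkey x hx'
        have hexp : Real.exp (-CW * (x - Tn)) * r0 = B x - (K + δ) := by
          simp only [hB]; ring
        rw [hexp]
        have : 2 * B x * (-CW * (B x - (K + δ)))
            = -2 * CW * B x ^ 2 + 2 * ε * B x + 2 * CW * δ * B x := by
          rw [← hCWK]; ring
        rw [this]
        rw [hfx] at h1
        have h2 : 0 < 2 * CW * δ * B x := by positivity
        nlinarith
      · -- initial condition
        have : B Tn = r0 + (K + δ) := by simp [hB]
        rw [this]
        nlinarith [norm_nonneg (f Tn)]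
    intro t ht
    have h := hsq ht
    calc ‖f t‖ = Real.sqrt (‖f t‖ ^ 2) := (Real.sqrt_sq (norm_nonneg _)).symm
      _ ≤ Real.sqrt (B t ^ 2) := Real.sqrt_le_sqrt h
      _ = B t := Real.sqrt_sq (hBpos t).le
  intro t ht
  have hfin : ‖f t‖ ≤ Real.exp (-CW * (t - Tn)) * r0 + K := by
    apply le_of_forall_pos_le_add
    intro δ hδ
    have := hmain δ hδ t ht
    linarith
  have hKeq : (Tn1 - Tn) / (Tn * CW) * P2Ln = K := by
    rw [hK, hε]
    field_simp
  rw [hKeq]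
  exact hfin
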